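/- Let Q be a quiver and Q' obtained from Q by contracting a single arrow δ that is not a loop. Then the induced map on cycles is well defined: the image of any cycle of Q is a cycle of Q' (of length one less if the cycle passes through δ), and no cycle of positive length in Q maps to a trivial path unless it equals δ itself. -/

import Mathlib

open Classical

/-- A quiver given by tail and head maps on an arrow type. -/
structure QuiverData (V E : Type*) where
  t : E → V
  h : E → V

variable {V E V' E' : Type*}

/-- `n_D(p)`: the number of steps of the path `p` (a list of arrows, in traversal
order) lying in the set of arrows `D`. -/
noncomputable def nD (D : Set E) (p : List E) : ℕ :=
  p.countP (fun e => decide (e ∈ D))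

/-- `p` is a composable path: the head of each step is the tail of the next. -/
def IsPath (Q : QuiverData V E) (p : List E) : Prop :=
  p.Chain' (fun a b => Q.h a = Q.t b)

/-- `p` is a nonempty oriented cycle. -/
def IsCycle (Q : QuiverData V E) (p : List E) : Prop :=
  IsPath Q p ∧ p ≠ [] ∧
    ∃ a b, p.head? = some a ∧ p.getLast? = some b ∧ Q.h b = Q.t a

/-- `D` is a perfect matching with respect to the set `U` of unit cycles:
each unit cycle contains precisely one arrow of `D`. -/
def IsPerfectMatching (U : Set (List E)) (D : Set E) : Prop :=
  ∀ c ∈ U, nD D c = 1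

/-- Abstract combinatorial model of a dimer quiver: the distinguished unit
cycles are oriented cycles, and each arrow lies in exactly two unit cycles. -/
def IsDimer (Q : QuiverData V E) (U : Set (List E)) : Prop :=
  (∀ c ∈ U, IsCycle Q c) ∧ (∀ e : E, {c ∈ U | e ∈ c}.ncard = 2)

/-- The defining relations of the dimer algebra: `p ∼ q` whenever `pa` and `qa`
are unit cycles for a common arrow `a` (here the path `pa`, "first `a`, then `p`",
is the list `a :: p`). -/
inductive DimerRel (U : Set (List E)) : List E → List E → Prop
  | base {p q : List E} {a : E} : (a :: p) ∈ U → (a :: q) ∈ U → DimerRel U p q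

/-- The congruence on paths generated by a relation `R`: the smallest equivalence
relation containing `R` and compatible with concatenation of paths.
`PathEquiv R p q` models `p = q` modulo the ideal generated by `R`. -/
inductive PathEquiv (R : List E → List E → Prop) : List E → List E → Prop
  | of {p q : List E} : R p q → PathEquiv R p q
  | refl (p : List E) : PathEquiv R p p
  | symm {p q : List E} : PathEquiv R p q → PathEquiv R q p
  | trans {p q r : List E} : PathEquiv R p q → PathEquiv R q r → PathEquiv R p r
  | mul {p q p' q' : List E} : PathEquiv R p q → PathEquiv R p' q' →
      PathEquiv R (p ++ p') (q ++ q')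

/-- Two sets of arrows are equivalent perfect matchings when they assign the same
count to every cycle. -/
def MatchingEquiv (Q : QuiverData V E) (D D' : Set E) : Prop :=
  ∀ p, IsCycle Q p → nD D p = nD D' p

/-- An arrow is nonrigid if every perfect matching containing it is equivalent to
a perfect matching not containing it. -/
def NonrigidArrow (Q : QuiverData V E) (U : Set (List E)) (e : E) : Prop :=
  ∀ D, IsPerfectMatching U D → e ∈ D →
    ∃ D', IsPerfectMatching U D' ∧ MatchingEquiv Q D D' ∧ e ∉ D'

/-- `p` is a path from `u` to `v`. -/
def PathFromTo (Q : QuiverData V E) (p : List E) (u v : V) : Prop :=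
  IsPath Q p ∧ ((p = [] ∧ u = v) ∨
    ∃ a b, p.head? = some a ∧ p.getLast? = some b ∧ Q.t a = u ∧ Q.h b = v)

/-- A perfect matching `D` is simple if `Q \ D` is strongly connected. -/
def IsSimpleMatching (Q : QuiverData V E) (U : Set (List E)) (D : Set E) : Prop :=
  IsPerfectMatching U D ∧
    ∀ u v : V, ∃ p, PathFromTo Q p u v ∧ ∀ e ∈ p, e ∉ D

/-- `ρ`, `φ` present `Q'` as obtained from `Q` by contracting the arrows `e`
with `φ e = none` to vertices. -/
def IsContractionMap (Q : QuiverData V E) (Q' : QuiverData V' E')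
    (ρ : V → V') (φ : E → Option E') : Prop :=
  (∀ e e', φ e = some e' → Q'.t e' = ρ (Q.t e) ∧ Q'.h e' = ρ (Q.h e)) ∧
  (∀ e, φ e = none → ρ (Q.t e) = ρ (Q.h e)) ∧
  Function.Surjective ρ ∧ (∀ e' : E', ∃ e, φ e = some e')

/-- Endpoints of an arrow traversed forwards (`true`) or backwards (`false`). -/
def dirEnds (Q : QuiverData V E) : E × Bool → V × V
  | (e, true) => (Q.t e, Q.h e)
  | (e, false) => (Q.h e, Q.t e)

/-- A nonempty unoriented cycle in the underlying graph of `Q`. -/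
def IsUnorientedCycle (Q : QuiverData V E) (w : List (E × Bool)) : Prop :=
  w ≠ [] ∧ w.Chain' (fun x y => (dirEnds Q x).2 = (dirEnds Q y).1) ∧
    ∃ x y, w.head? = some x ∧ w.getLast? = some y ∧
      (dirEnds Q y).2 = (dirEnds Q x).1

/-- `c'` is a cyclic rotation of `c`. -/
def IsRotation (c c' : List E) : Prop := ∃ x y, c = x ++ y ∧ c' = y ++ x

/-- A unit cycle based at the vertex `i`: a cyclic rotation of a unit cycle whose
first arrow has tail `i`. -/
def BasedUnitCycle (Q : QuiverData V E) (U : Set (List E)) (i : V)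
    (c : List E) : Prop :=
  (∃ c₀ ∈ U, IsRotation c₀ c) ∧ ∃ a, c.head? = some a ∧ Q.t a = i


/-- Key lemma: the image of a composable path under a contraction map is
composable, and its endpoints are controlled. -/
theorem contractPath_key (Q : QuiverData V E) (Q' : QuiverData V' E')
    (ρ : V → V') (φ : E → Option E')
    (hφ : ∀ e e', φ e = some e' → Q'.t e' = ρ (Q.t e) ∧ Q'.h e' = ρ (Q.h e))
    (hnone : ∀ e, φ e = none → ρ (Q.t e) = ρ (Q.h e)) :
    ∀ p : List E, p.Chain' (fun a b => Q.h a = Q.t b) →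
      (p.filterMap φ).Chain' (fun a b => Q'.h a = Q'.t b) ∧
      (∀ a b, p.head? = some a → p.getLast? = some b →
        ((p.filterMap φ = [] ∧ ρ (Q.t a) = ρ (Q.h b)) ∨
         (∃ a' b', (p.filterMap φ).head? = some a' ∧
            (p.filterMap φ).getLast? = some b' ∧
            Q'.t a' = ρ (Q.t a) ∧ Q'.h b' = ρ (Q.h b)))) := by
  intro p
  induction p with
  | nil => intro _; exact ⟨List.isChain_nil, fun a b h => by simp at h⟩
  | cons e rest ih =>
    intro hch
    have hch' : rest.Chain' (fun a b => Q.h a = Q.t b) := hch.tail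
    obtain ⟨ihc, ihe⟩ := ih hch'
    cases hrest : rest with
    | nil =>
      subst hrest
      cases hfe : φ e with
      | none =>
        refine ⟨by simp [hfe]; exact List.isChain_nil, ?_⟩
        intro a b ha hb
        simp only [List.head?_cons, Option.some.injEq] at ha
        simp only [List.getLast?_singleton, Option.some.injEq] at hb
        subst ha; subst hb
        exact Or.inl ⟨by simp [hfe], hnone e hfe⟩
      | some e' =>
        refine ⟨by simp [hfe]; exact List.isChain_singleton _, ?_⟩
        intro a b ha hb
        simp only [List.head?_cons, Option.some.injEq] at ha
        simp only [List.getLast?_singleton, Option.some.injEq] at hb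
        subst ha; subst hb
        exact Or.inr ⟨e', e', by simp [hfe], by simp [hfe],
          (hφ e e' hfe).1.symm ▸ rfl, (hφ e e' hfe).2.symm ▸ rfl⟩
    | cons a₂ rest₂ =>
      subst hrest
      have hhead : Q.h e = Q.t a₂ := (List.isChain_cons_cons.mp hch).1
      have ihe' := ihe a₂ ((a₂ :: rest₂).getLast (by simp)) rfl
        (List.getLast?_eq_getLast (by simp))
      set b₀ := (a₂ :: rest₂).getLast (by simp) with hb₀
      have hlast : (e :: a₂ :: rest₂).getLast? = some b₀ := by
        rw [List.getLast?_cons_cons]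
        exact List.getLast?_eq_getLast (by simp)
      cases hfe : φ e with
      | none =>
        have heq : ρ (Q.t e) = ρ (Q.h e) := hnone e hfe
        have hfm : (e :: a₂ :: rest₂).filterMap φ = (a₂ :: rest₂).filterMap φ := by
          simp [List.filterMap_cons, hfe]
        refine ⟨by rw [hfm]; exact ihc, ?_⟩
        intro a b ha hb
        simp only [List.head?_cons, Option.some.injEq] at ha
        subst ha
        rw [hlast] at hb
        injection hb with hb; subst hb
        rw [hfm]
        rcases ihe' with ⟨h1, h2⟩ | ⟨a', b', h1, h2, h3, h4⟩
        · exact Or.inl ⟨h1, by rw [heq, hhead]; exact h2⟩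
        · exact Or.inr ⟨a', b', h1, h2, by rw [h3, ← hhead, ← heq], h4⟩
      | some e' =>
        have hfm : (e :: a₂ :: rest₂).filterMap φ =
            e' :: (a₂ :: rest₂).filterMap φ := by
          simp [List.filterMap_cons, hfe]
        have he'1 : Q'.t e' = ρ (Q.t e) := (hφ e e' hfe).1
        have he'2 : Q'.h e' = ρ (Q.h e) := (hφ e e' hfe).2
        constructor
        · rw [hfm]
          rcases ihe' with ⟨h1, _⟩ | ⟨a', b', h1, h2, h3, h4⟩
          · rw [h1]; exact List.isChain_singleton _
          · refine List.isChain_cons.mpr ⟨?_, ihc⟩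
            intro y hy
            rw [h1] at hy; injection hy with hy; subst hy
            rw [h3, ← hhead, he'2]
        · intro a b ha hb
          simp only [List.head?_cons, Option.some.injEq] at ha
          subst ha
          rw [hlast] at hb
          injection hb with hb; subst hb
          rcases ihe' with ⟨h1, h2⟩ | ⟨a', b', h1, h2, h3, h4⟩
          · rw [hfm, h1]
            refine Or.inr ⟨e', e', rfl, rfl, he'1, ?_⟩
            rw [he'2, hhead]; exact h2
          · refine Or.inr ⟨e', b', by simp [hfm], ?_, he'1, h4⟩
            rw [hfm]
            rcases hq : (a₂ :: rest₂).filterMap φ with _ | ⟨x, xs⟩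
            · rw [hq] at h1; simp at h1
            · rw [hq] at h2
              rw [List.getLast?_cons_cons]
              exact h2


/-- contracting a single non-loop arrow `δ` of a quiver `Q`
induces a well-defined map on cycles: the image of a cycle of `Q` is a cycle of
`Q'`, of length reduced by the number of passes through `δ` (one less if the
cycle passes through `δ` once), and no cycle of positive length maps to a
trivial path unless it equals `δ` itself. -/
theorem stmt11 (Q : QuiverData V E) (Q' : QuiverData V' E')
    (ρ : V → V') (φ : E → Option E') (hc : IsContractionMap Q Q' ρ φ)
    (δ : E) (hδ : ∀ e, φ e = none ↔ e = δ)
    (hinj : ∀ e₁ e₂ e', φ e₁ = some e' → φ e₂ = some e' → e₁ = e₂)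
    (hρ : ∀ x y : V, ρ x = ρ y ↔ x = y ∨ ({x, y} : Set V) = {Q.t δ, Q.h δ})
    (hloop : Q.t δ ≠ Q.h δ) :
    (∀ p, IsCycle Q p → IsCycle Q' (p.filterMap φ) ∧
      (p.filterMap φ).length = p.length - p.countP (fun e => decide (e = δ))) ∧
    (∀ p, IsCycle Q p → p.filterMap φ = [] → p = [δ]) := by
  obtain ⟨hφ, hnone, -, -⟩ := hc
  have key := contractPath_key Q Q' ρ φ hφ hnone
  -- length fact
  have hlen : ∀ p : List E,
      (p.filterMap φ).length + p.countP (fun e => decide (e = δ)) = p.length := by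
    intro p
    induction p with
    | nil => simp
    | cons e rest ih =>
      by_cases he : e = δ
      · subst he
        have hfδ : φ e = none := (hδ e).mpr rfl
        simp [List.filterMap_cons, hfδ, List.countP_cons, ← ih]
        omega
      · obtain ⟨e', he'⟩ : ∃ e', φ e = some e' := by
          cases h : φ e with
          | none => exact absurd ((hδ e).mp h) he
          | some e' => exact ⟨e', rfl⟩
        simp [List.filterMap_cons, he', List.countP_cons, he, ← ih]
        omega
  -- a cycle never maps to the empty path
  have hne : ∀ p, IsCycle Q p → p.filterMap φ ≠ [] := by
    intro p ⟨hpath, hnil, a, b, ha, hb, hab⟩ hempty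
    have hall : ∀ e ∈ p, e = δ := by
      intro e he
      exact (hδ e).mp (List.filterMap_eq_nil_iff.mp hempty e he)
    cases p with
    | nil => exact hnil rfl
    | cons x rest =>
      cases rest with
      | nil =>
        simp only [List.head?_cons, Option.some.injEq] at ha
        simp only [List.getLast?_singleton, Option.some.injEq] at hb
        have hx : x = δ := hall x (by simp)
        subst hx; subst ha; subst hb
        exact hloop hab.symm
      | cons y rest₂ =>
        have hx : x = δ := hall x (by simp)
        have hy : y = δ := hall y (by simp)
        have := (List.isChain_cons_cons.mp hpath).1
        rw [hx, hy] at this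
        exact hloop this.symm
  constructor
  · intro p hcyc
    obtain ⟨hpath, hnil, a, b, ha, hb, hab⟩ := hcyc
    obtain ⟨hchain, hend⟩ := key p hpath
    refine ⟨⟨hchain, hne p ⟨hpath, hnil, a, b, ha, hb, hab⟩, ?_⟩, ?_⟩
    · rcases hend a b ha hb with ⟨h1, _⟩ | ⟨a', b', h1, h2, h3, h4⟩
      · exact absurd h1 (hne p ⟨hpath, hnil, a, b, ha, hb, hab⟩)
      · exact ⟨a', b', h1, h2, by rw [h4, hab, ← h3]⟩
    · have := hlen p
      omega
  · intro p hcyc hempty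
    exact absurd hempty (hne p hcyc)
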